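/- arXiv:1207.1899 — 4 statements merged into one kernel-verified Lean document; each statement's English description precedes it below -/
import Mathlib

section
/- For binary states, the MTD model probabilities satisfy the linear relations p_{...i_r...i_s...1} + p_{...ĩ_r...ĩ_s...1} = p_{...i_r...ĩ_s...1} + p_{...ĩ_r...i_s...1}, where ĩ denotes swapping the binary state; i.e., for each fixed final state, the resulting l-dimensional 2×2×...×2 tensor lies in the linear space of tensors of the form u + x_{i_0} + y_{i_1} + ... + z_{i_{l-1}} (tropical rank 1). -/
lemma sum_update_aux {l : ℕ} (f : Fin l → Fin 2 → ℝ) (i : Fin l → Fin 2)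
    (r : Fin l) (a : Fin 2) :
    ∑ j, f j (Function.update i r a j) = (∑ j, f j (i j)) - f r (i r) + f r a := by
  have h : (fun j => f j (Function.update i r a j)) =
      Function.update (fun j => f j (i j)) r (f r a) := by
    funext j
    rcases eq_or_ne j r with h | h
    · subst h; simp
    · simp [Function.update_of_ne h]
  rw [h, Finset.sum_update_of_mem (Finset.mem_univ r),
    ← Finset.add_sum_erase _ _ (Finset.mem_univ r),
    Finset.sdiff_singleton_eq_erase]
  ring

/-- For binary states, the MTD probabilities of sequences with a fixed
final state `c` satisfy the exchange relations
`p_{..i_r..i_s..c} + p_{..ĩ_r..ĩ_s..c} = p_{..i_r..ĩ_s..c} + p_{..ĩ_r..i_s..c}`,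
where `ĩ = 1 - i` swaps the two binary states; i.e. the `2×⋯×2` tensor of these
probabilities has tropical rank 1. -/
theorem mtd_binary_exchange_relations (l : ℕ) (hl : 0 < l)
    (lam : Fin l → ℝ) (hlam : ∀ j, 0 ≤ lam j) (hlamsum : ∑ j, lam j = 1)
    (q : Fin 2 → Fin 2 → ℝ) (hq : ∀ i j, 0 ≤ q i j) (hqrow : ∀ i, q i 0 + q i 1 = 1)
    (c : Fin 2) (r s : Fin l) (hrs : r ≠ s) (i : Fin l → Fin 2) :
    (fun i : Fin l → Fin 2 => (1 / 2 ^ l : ℝ) * ∑ j : Fin l, lam j * q (i j) c) i +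
      (fun i : Fin l → Fin 2 => (1 / 2 ^ l : ℝ) * ∑ j : Fin l, lam j * q (i j) c)
        (Function.update (Function.update i r (1 - i r)) s (1 - i s)) =
    (fun i : Fin l → Fin 2 => (1 / 2 ^ l : ℝ) * ∑ j : Fin l, lam j * q (i j) c)
        (Function.update i r (1 - i r)) +
      (fun i : Fin l → Fin 2 => (1 / 2 ^ l : ℝ) * ∑ j : Fin l, lam j * q (i j) c)
        (Function.update i s (1 - i s)) := by
  simp only
  rw [sum_update_aux (fun j x => lam j * q x c) i r,
      sum_update_aux (fun j x => lam j * q x c) i s,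
      sum_update_aux (fun j x => lam j * q x c) _ s]
  rw [Function.update_of_ne (Ne.symm hrs),
      sum_update_aux (fun j x => lam j * q x c) i r]
  ring
end

section
/- A function p : {1,2}^l → ℝ satisfies all relations p(..i_r..i_s..) + p(..ĩ_r..ĩ_s..) = p(..i_r..ĩ_s..) + p(..ĩ_r..i_s..) for all pairs r < s if and only if there exist real numbers c and a_0, a_1, ..., a_{l-1} such that p(i_0,...,i_{l-1}) = c + sum_{j: i_j = 1} a_j. In particular, the set of such functions is a linear subspace of dimension l + 1 in ℝ^{2^l}. -/
open Finset

lemma sum_split {l : ℕ} (f : Fin l → ℝ) (r s : Fin l) (hrs : r ≠ s) :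
    ∑ j, f j = f r + f s + ∑ j ∈ (univ.erase r).erase s, f j := by
  have hs : s ∈ univ.erase r := by simp [Ne.symm, hrs.symm]
  rw [← Finset.add_sum_erase _ f (mem_univ r), ← Finset.add_sum_erase _ f hs]
  ring

lemma tail_congr {l : ℕ} (i : Fin l → Fin 2) (r s : Fin l) (v w : Fin 2) :
    ∀ j ∈ (univ.erase r).erase s,
      Function.update (Function.update i r v) s w j = i j := by
  intro j hj
  simp only [mem_erase] at hj
  rw [Function.update_of_ne hj.1, Function.update_of_ne hj.2.1]

lemma affine_satisfies {l : ℕ} (c : ℝ) (a : Fin l → ℝ)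
    (p : (Fin l → Fin 2) → ℝ)
    (hp : ∀ i : Fin l → Fin 2, p i = c + ∑ j : Fin l, if i j = 1 then a j else 0) :
    ∀ r s : Fin l, r ≠ s → ∀ i : Fin l → Fin 2,
      p i + p (Function.update (Function.update i r (1 - i r)) s (1 - i s)) =
        p (Function.update i r (1 - i r)) + p (Function.update i s (1 - i s)) := by
  intro r s hrs i
  have key : ∀ v w : Fin 2,
      p (Function.update (Function.update i r v) s w)
        = c + ((if v = 1 then a r else 0) + (if w = 1 then a s else 0)
            + ∑ j ∈ (univ.erase r).erase s, if i j = 1 then a j else 0) := by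
    intro v w
    rw [hp, sum_split _ r s hrs]
    have h1 : Function.update (Function.update i r v) s w r = v := by
      rw [Function.update_of_ne hrs, Function.update_self]
    have h2 : Function.update (Function.update i r v) s w s = w :=
      Function.update_self _ _ _
    rw [h1, h2, Finset.sum_congr rfl fun j hj => by rw [tail_congr i r s v w j hj]]
  have hi : i = Function.update (Function.update i r (i r)) s (i s) := by
    funext j
    rcases eq_or_ne j s with rfl | hjs
    · simp
    · rcases eq_or_ne j r with rfl | hjr
      · rw [Function.update_of_ne hjs, Function.update_self]
      · rw [Function.update_of_ne hjs, Function.update_of_ne hjr]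
  have hr : Function.update i r (1 - i r)
      = Function.update (Function.update i r (1 - i r)) s (i s) := by
    funext j
    rcases eq_or_ne j s with rfl | hjs
    · rw [Function.update_self, Function.update_of_ne hrs.symm]
    · rw [Function.update_of_ne hjs]
  have hs2 : Function.update i s (1 - i s)
      = Function.update (Function.update i r (i r)) s (1 - i s) := by
    funext j
    rcases eq_or_ne j s with rfl | hjs
    · simp
    · rcases eq_or_ne j r with rfl | hjr
      · rw [Function.update_of_ne hjs, Function.update_of_ne hjs, Function.update_self]
      · rw [Function.update_of_ne hjs, Function.update_of_ne hjs, Function.update_of_ne hjr]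
  have e1 := key (i r) (i s)
  have e2 := key (1 - i r) (1 - i s)
  have e3 := key (1 - i r) (i s)
  have e4 := key (i r) (1 - i s)
  rw [← hi] at e1
  rw [← hr] at e3
  rw [← hs2] at e4
  rw [e1, e2, e3, e4]
  ring

lemma filter_flip {l : ℕ} (i : Fin l → Fin 2) (r : Fin l) (h : i r = 1) :
    univ.filter (fun j => Function.update i r (1 - i r) j = 1)
      = (univ.filter (fun j => i j = 1)).erase r := by
  ext j
  rcases eq_or_ne j r with rfl | hj
  · simp [Function.update_self, h]
  · simp [Function.update_of_ne hj, hj]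

lemma fin2_eq_zero {x : Fin 2} (h : x ≠ 1) : x = 0 := by omega

lemma satisfies_affine {l : ℕ} (p : (Fin l → Fin 2) → ℝ)
    (hrel : ∀ r s : Fin l, r ≠ s → ∀ i : Fin l → Fin 2,
      p i + p (Function.update (Function.update i r (1 - i r)) s (1 - i s)) =
        p (Function.update i r (1 - i r)) + p (Function.update i s (1 - i s))) :
    ∃ (c : ℝ) (a : Fin l → ℝ),
      ∀ i : Fin l → Fin 2, p i = c + ∑ j : Fin l, if i j = 1 then a j else 0 := by
  set c : ℝ := p (fun _ => 0) with hc
  set a : Fin l → ℝ := fun j => p (Function.update (fun _ => 0) j 1) - c with ha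
  have main : ∀ n : ℕ, ∀ i : Fin l → Fin 2,
      (univ.filter (fun j => i j = 1)).card = n →
      p i = c + ∑ j ∈ univ.filter (fun j => i j = 1), a j := by
    intro n
    induction n using Nat.strong_induction_on with
    | _ n ih =>
      intro i hcard
      rcases Nat.lt_or_ge n 2 with h2 | h2
      · interval_cases n
        · rw [Finset.card_eq_zero] at hcard
          have hi : i = fun _ => 0 := by
            funext j
            refine fin2_eq_zero fun h1 => ?_
            have : j ∈ univ.filter (fun j => i j = 1) := by simp [h1]
            rw [hcard] at this
            exact absurd this (Finset.notMem_empty j)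
          rw [hcard, Finset.sum_empty, hi, ← hc, add_zero]
        · obtain ⟨r, hr⟩ := Finset.card_eq_one.mp hcard
          have hir : i r = 1 := by
            have : r ∈ univ.filter (fun j => i j = 1) := hr ▸ Finset.mem_singleton_self r
            exact (mem_filter.mp this).2
          have hi : i = Function.update (fun _ => 0) r 1 := by
            funext j
            rcases eq_or_ne j r with rfl | hj
            · rw [Function.update_self, hir]
            · rw [Function.update_of_ne hj]
              refine fin2_eq_zero fun h1 => ?_
              have : j ∈ univ.filter (fun j => i j = 1) := by simp [h1]
              rw [hr, Finset.mem_singleton] at this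
              exact hj this
          rw [hr, Finset.sum_singleton, hi, ha]
          ring
      · have h1 : 1 < (univ.filter (fun j => i j = 1)).card := by omega
        obtain ⟨r, hrmem, s, hsmem, hrs'⟩ := Finset.one_lt_card.mp h1
        have hrs : r ≠ s := hrs'
        have hir : i r = 1 := (mem_filter.mp hrmem).2
        have his : i s = 1 := (mem_filter.mp hsmem).2
        set S := univ.filter (fun j => i j = 1) with hS
        have hfr := filter_flip i r hir
        have hfs := filter_flip i s his
        have hus : Function.update i r (1 - i r) s = i s := Function.update_of_ne hrs.symm _ _
        have hfd : univ.filter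
            (fun j => Function.update (Function.update i r (1 - i r)) s (1 - i s) j = 1)
            = (S.erase r).erase s := by
          have h := filter_flip (Function.update i r (1 - i r)) s (by rw [hus]; exact his)
          rw [hus] at h
          rw [h, hfr]
        have hsr : s ∈ S.erase r := Finset.mem_erase.mpr ⟨hrs.symm, hsmem⟩
        have ihr := ih (n - 1) (by omega) (Function.update i r (1 - i r))
          (by rw [hfr, Finset.card_erase_of_mem hrmem]; omega)
        have ihs := ih (n - 1) (by omega) (Function.update i s (1 - i s))
          (by rw [hfs, Finset.card_erase_of_mem hsmem]; omega)
        have ihd := ih (n - 2) (by omega)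
          (Function.update (Function.update i r (1 - i r)) s (1 - i s))
          (by rw [hfd, Finset.card_erase_of_mem hsr, Finset.card_erase_of_mem hrmem]; omega)
        rw [hfr, ← hS] at ihr
        rw [hfs, ← hS] at ihs
        rw [hfd] at ihd
        have hrel' := hrel r s hrs i
        have t1 := Finset.sum_erase_add S a hrmem
        have t2 := Finset.sum_erase_add S a hsmem
        have t3 := Finset.sum_erase_add (S.erase r) a hsr
        linarith
  refine ⟨c, a, fun i => ?_⟩
  have := main _ i rfl
  rw [Finset.sum_filter] at this
  exact this

noncomputable def affMap (l : ℕ) : (ℝ × (Fin l → ℝ)) →ₗ[ℝ] ((Fin l → Fin 2) → ℝ) where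
  toFun ca := fun i => ca.1 + ∑ j, if i j = 1 then ca.2 j else 0
  map_add' x y := by
    funext i
    simp only [Prod.fst_add, Prod.snd_add, Pi.add_apply]
    rw [show (∑ j, if i j = 1 then x.2 j + y.2 j else 0)
        = ∑ j, ((if i j = 1 then x.2 j else 0) + (if i j = 1 then y.2 j else 0)) from
      Finset.sum_congr rfl fun j _ => by split <;> simp, Finset.sum_add_distrib]
    ring
  map_smul' m x := by
    funext i
    simp only [Prod.smul_fst, Prod.smul_snd, smul_eq_mul, Pi.smul_apply, RingHom.id_apply]
    rw [show (∑ j, if i j = 1 then m * x.2 j else 0)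
        = ∑ j, m * (if i j = 1 then x.2 j else 0) from
      Finset.sum_congr rfl fun j _ => by split <;> simp, ← Finset.mul_sum]
    ring

lemma affMap_inj (l : ℕ) : Function.Injective (affMap l) := by
  rw [← LinearMap.ker_eq_bot]
  ext ⟨c, a⟩
  simp only [LinearMap.mem_ker, Submodule.mem_bot]
  constructor
  · intro h
    have h0 := congrFun h (fun _ => 0)
    simp only [affMap, LinearMap.coe_mk, AddHom.coe_mk, Pi.zero_apply] at h0
    have hc : c = 0 := by
      rw [Finset.sum_eq_zero (fun j _ => by norm_num)] at h0
      linarith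
    have ha : a = 0 := by
      funext j
      have hj := congrFun h (Function.update (fun _ => 0) j 1)
      simp only [affMap, LinearMap.coe_mk, AddHom.coe_mk, Pi.zero_apply] at hj
      rw [show (∑ k, if Function.update (fun _ => (0 : Fin 2)) j 1 k = 1 then a k else 0)
          = ∑ k, if k = j then a k else 0 from Finset.sum_congr rfl fun k _ => by
            rcases eq_or_ne k j with rfl | hk
            · simp
            · simp [Function.update_of_ne hk, hk],
        Finset.sum_ite_eq' univ j a] at hj
      simp only [mem_univ, if_true] at hj
      simpa [hc] using hj
    simp [hc, ha, Prod.ext_iff]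
  · rintro h
    rw [Prod.ext_iff] at h
    obtain ⟨h1, h2⟩ := h
    simp only at h1 h2
    subst h1 h2
    ext i
    simp [affMap]




/-- A function `p : {1,2}^l → ℝ` satisfies all exchange relations
`p(..i_r..i_s..) + p(..ĩ_r..ĩ_s..) = p(..i_r..ĩ_s..) + p(..ĩ_r..i_s..)` (r ≠ s)
iff it has the form `p(i) = c + ∑_{j : i_j = 1} a_j`; moreover the set of such
functions is a linear subspace of dimension `l + 1` of `ℝ^{2^l}`.
(Binary state 1 is encoded as `(1 : Fin 2)` and `ĩ = 1 - i`.) -/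
theorem tropical_rank_one_characterization (l : ℕ) (hl : 0 < l) :
    (∀ p : (Fin l → Fin 2) → ℝ,
      (∀ r s : Fin l, r ≠ s → ∀ i : Fin l → Fin 2,
          p i + p (Function.update (Function.update i r (1 - i r)) s (1 - i s)) =
            p (Function.update i r (1 - i r)) + p (Function.update i s (1 - i s))) ↔
        ∃ (c : ℝ) (a : Fin l → ℝ),
          ∀ i : Fin l → Fin 2, p i = c + ∑ j : Fin l, if i j = 1 then a j else 0) ∧
    ∃ V : Submodule ℝ ((Fin l → Fin 2) → ℝ),
      (V : Set ((Fin l → Fin 2) → ℝ)) =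
        {p | ∀ r s : Fin l, r ≠ s → ∀ i : Fin l → Fin 2,
          p i + p (Function.update (Function.update i r (1 - i r)) s (1 - i s)) =
            p (Function.update i r (1 - i r)) + p (Function.update i s (1 - i s))} ∧
      Module.finrank ℝ V = l + 1 := by
  have main : ∀ p : (Fin l → Fin 2) → ℝ,
      (∀ r s : Fin l, r ≠ s → ∀ i : Fin l → Fin 2,
          p i + p (Function.update (Function.update i r (1 - i r)) s (1 - i s)) =
            p (Function.update i r (1 - i r)) + p (Function.update i s (1 - i s))) ↔
        ∃ (c : ℝ) (a : Fin l → ℝ),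
          ∀ i : Fin l → Fin 2, p i = c + ∑ j : Fin l, if i j = 1 then a j else 0 := by
    intro p
    constructor
    · exact satisfies_affine p
    · rintro ⟨c, a, h⟩
      exact affine_satisfies c a p h
  refine ⟨main, LinearMap.range (affMap l), ?_, ?_⟩
  · ext p
    simp only [SetLike.mem_coe, LinearMap.mem_range, Set.mem_setOf_eq]
    constructor
    · rintro ⟨⟨c, a⟩, rfl⟩
      exact affine_satisfies c a _ (fun i => rfl)
    · intro hrel
      obtain ⟨c, a, h⟩ := (main p).mp hrel
      exact ⟨(c, a), by funext i; exact (h i).symm⟩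
  · rw [LinearMap.finrank_range_of_inj (affMap_inj l)]
    simp [Module.finrank_prod, Module.finrank_fintype_fun_eq_card]
    ring
end

section
/- The MTD parametrization map annihilates the linear forms p_{i_0 i_1 ... i_{l-1} i_l} − sum_{j=0}^{l-1} p_{m...m i_j m...m i_l} + (l−1) p_{m m ... m i_l}: i.e., substituting the MTD parametrization into this expression yields 0 for every sequence (i_0,...,i_l) ∈ {1,...,m}^{l+1}. -/
/-- The MTD parametrization (with `m + 1` states; the paper's
state "m" is `Fin.last m`) annihilates the linear forms
`p_{i_0 ... i_{l-1} i_l} − ∑_{j=0}^{l-1} p_{m...m i_j m...m i_l}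
 + (l−1)·p_{m...m i_l}`
for every sequence `i ∈ {1,...,m+1}^{l+1}`, where in the middle sum the state
`i_j` sits at position `j` and all other initial positions hold state "m". -/
theorem mtd_linear_forms_vanish (l m : ℕ) (hl : 0 < l)
    (lam : Fin l → ℝ) (q : Fin (m + 1) → Fin (m + 1) → ℝ)
    (p : (Fin (l + 1) → Fin (m + 1)) → ℝ)
    (hp : ∀ i, p i = (1 / (m + 1 : ℝ) ^ l) *
        ∑ j : Fin l, lam j * q (i j.castSucc) (i (Fin.last l)))
    (i : Fin (l + 1) → Fin (m + 1)) :
    p i -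
        (∑ j : Fin l,
          p fun t : Fin (l + 1) =>
            if t = Fin.last l then i (Fin.last l)
            else if t = j.castSucc then i j.castSucc else Fin.last m) +
      ((l : ℝ) - 1) *
        p (fun t : Fin (l + 1) =>
            if t = Fin.last l then i (Fin.last l) else Fin.last m) = 0 := by
  have hne : ∀ k : Fin l, (k.castSucc : Fin (l + 1)) ≠ Fin.last l :=
    fun k => (Fin.castSucc_lt_last k).ne
  simp only [hp, if_pos rfl, if_neg (hne _), Fin.castSucc_inj, if_true]
  set c : ℝ := 1 / (m + 1 : ℝ) ^ l with hc
  set x : Fin (m + 1) := i (Fin.last l) with hx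
  have inner : ∀ j : Fin l,
      (∑ k : Fin l, lam k * q (if k = j then i j.castSucc else Fin.last m) x)
      = (∑ k : Fin l, lam k * q (Fin.last m) x)
        + (lam j * q (i j.castSucc) x - lam j * q (Fin.last m) x) := by
    intro j
    have : ∀ k : Fin l,
        lam k * q (if k = j then i j.castSucc else Fin.last m) x
        = lam k * q (Fin.last m) x
          + (if k = j then lam j * q (i j.castSucc) x - lam j * q (Fin.last m) x else 0) := by
      intro k
      by_cases h : k = j <;> simp [h] <;> ring
    rw [Finset.sum_congr rfl fun k _ => this k, Finset.sum_add_distrib,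
      Finset.sum_ite_eq' Finset.univ j]
    simp
  rw [Finset.sum_congr rfl fun j _ => congrArg (c * ·) (inner j)]
  simp only [mul_add, mul_sub, Finset.sum_add_distrib, Finset.sum_sub_distrib,
    Finset.sum_const, Finset.card_univ, Fintype.card_fin, nsmul_eq_mul, ← Finset.mul_sum]
  ring
end

section
/- The MTD model with binary states is identifiable away from equal-row transition matrices: if two parameter tuples (a,b,λ) and (a',b',λ') with a ≠ b and a' ≠ b' (where a = q_{11}, b = q_{21}, λ the mixing distribution) induce the same probability distribution p via the binary MTD parametrization, then a = a', b = b', and λ = λ'. -/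
/-- The binary MTD model is identifiable away from equal-row
transition matrices: if `(a,b,λ)` and `(a',b',λ')` with `a ≠ b`, `a' ≠ b'`
induce the same distribution `p_{i_0...i_l} = (1/2^l) ∑_j λ_j q_{i_{j-1},i_l}`
(where `q` has rows `(a, 1−a)` and `(b, 1−b)`, state 1 encoded as `0 : Fin 2`),
then `a = a'`, `b = b'` and `λ = λ'`. -/
theorem mtd_binary_identifiable (l : ℕ) (hl : 2 ≤ l)
    (a b a' b' : ℝ) (hab : a ≠ b) (hab' : a' ≠ b')
    (lam lam' : Fin l → ℝ)
    (hlam : ∀ j, 0 ≤ lam j) (hlamsum : ∑ j, lam j = 1)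
    (hlam' : ∀ j, 0 ≤ lam' j) (hlamsum' : ∑ j, lam' j = 1)
    (heq : ∀ i : Fin (l + 1) → Fin 2,
      (1 / 2 ^ l : ℝ) *
          ∑ j : Fin l, lam j *
            (if i j.castSucc = 0 then (if i (Fin.last l) = 0 then a else 1 - a)
             else (if i (Fin.last l) = 0 then b else 1 - b)) =
        (1 / 2 ^ l : ℝ) *
          ∑ j : Fin l, lam' j *
            (if i j.castSucc = 0 then (if i (Fin.last l) = 0 then a' else 1 - a')
             else (if i (Fin.last l) = 0 then b' else 1 - b'))) :
    a = a' ∧ b = b' ∧ lam = lam' := by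
  have h2 : (1 / 2 ^ l : ℝ) ≠ 0 := by positivity
  have key : ∀ i : Fin (l + 1) → Fin 2,
      (∑ j : Fin l, lam j *
            (if i j.castSucc = 0 then (if i (Fin.last l) = 0 then a else 1 - a)
             else (if i (Fin.last l) = 0 then b else 1 - b))) =
        ∑ j : Fin l, lam' j *
            (if i j.castSucc = 0 then (if i (Fin.last l) = 0 then a' else 1 - a')
             else (if i (Fin.last l) = 0 then b' else 1 - b')) :=
    fun i => mul_left_cancel₀ h2 (heq i)
  -- a = a'
  have hA : a = a' := by
    have h := key (fun _ => 0)
    simp [← Finset.sum_mul, hlamsum, hlamsum'] at h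
    exact h
  -- b = b'
  have hB : b = b' := by
    have h := key (fun k => if k = Fin.last l then 0 else 1)
    simp only [(Fin.castSucc_lt_last _).ne, if_neg, ite_false, ite_true, if_pos rfl] at h
    simp [← Finset.sum_mul, hlamsum, hlamsum'] at h
    exact h
  refine ⟨hA, hB, ?_⟩
  funext j0
  have h := key (fun k => if k = j0.castSucc ∨ k = Fin.last l then 0 else 1)
  have h1 : ∀ j : Fin l, (j.castSucc = j0.castSucc ∨ j.castSucc = Fin.last l) ↔ j = j0 := by
    intro j
    simp [(Fin.castSucc_lt_last j).ne, Fin.castSucc_injective l |>.eq_iff]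
  simp only [h1, (Fin.castSucc_lt_last j0).ne', or_true, ite_true, if_pos rfl] at h
  have hL : (∑ j : Fin l, lam j * (if j = j0 then a else b)) =
      ∑ j : Fin l, lam' j * (if j = j0 then a' else b') := by
    convert h using 3 <;> split <;> rfl
  have eval : ∀ (μ : Fin l → ℝ) (x y : ℝ), (∑ j, μ j = 1) →
      (∑ j : Fin l, μ j * (if j = j0 then x else y)) = y + μ j0 * (x - y) := by
    intro μ x y hμ
    have hc : ∀ j : Fin l, μ j * (if j = j0 then x else y)
        = (if j = j0 then μ j * (x - y) else 0) + μ j * y := by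
      intro j; split <;> ring
    rw [Finset.sum_congr rfl (fun j _ => hc j), Finset.sum_add_distrib,
      Finset.sum_ite_eq' Finset.univ j0, ← Finset.sum_mul, hμ]
    simp [add_comm]
  rw [eval lam a b hlamsum, eval lam' a' b' hlamsum', ← hA, ← hB] at hL
  have : lam j0 * (a - b) = lam' j0 * (a - b) := by linarith
  exact mul_right_cancel₀ (sub_ne_zero.mpr hab) this
end
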